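/- For the half-space classifier with boundary hyperplane orthogonal to m_1 - m_2 passing through (m_1+m_2)/2, applied to a mixture α·N(m_1,Σ_1) + (1-α)·N(m_2,Σ_2), the misclassification error equals α·Q(||m_1-m_2||²/(2√((m_1-m_2)ᵀΣ_1(m_1-m_2)))) + (1-α)·Q(||m_1-m_2||²/(2√((m_1-m_2)ᵀΣ_2(m_1-m_2)))). -/

import Mathlib

open MeasureTheory ProbabilityTheory Matrix
open scoped NNReal

/-- The Gaussian tail function `Q(x) = (1/√(2π)) ∫_x^∞ e^{-u²/2} du`. -/
noncomputable def Q (x : ℝ) : ℝ :=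
  (Real.sqrt (2 * Real.pi))⁻¹ * ∫ u in Set.Ioi x, Real.exp (-u ^ 2 / 2)

/-- The square root of a positive semidefinite matrix (removed from Mathlib; old definition). -/
noncomputable def Matrix.PosSemidef.sqrt {n : Type*} [Fintype n] [DecidableEq n]
    {A : Matrix n n ℝ} (hA : A.PosSemidef) : Matrix n n ℝ :=
  (hA.1.eigenvectorUnitary : Matrix n n ℝ) * diagonal ((↑) ∘ (√·) ∘ hA.1.eigenvalues)
    * (star hA.1.eigenvectorUnitary : Matrix n n ℝ)

/-- The multivariate Gaussian `N(m, S)` on `ℝ^p`, realized as the pushforward of the standard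
Gaussian product measure under `x ↦ m + √S x`. -/
noncomputable def gaussianVec {p : ℕ} (m : Fin p → ℝ) {S : Matrix (Fin p) (Fin p) ℝ}
    (hS : S.PosSemidef) : Measure (Fin p → ℝ) :=
  (Measure.pi fun _ : Fin p => gaussianReal 0 1).map fun x => m + hS.sqrt.mulVec x

lemma Matrix.PosSemidef.sqrt_transpose' {n : Type*} [Fintype n] [DecidableEq n]
    {A : Matrix n n ℝ} (hA : A.PosSemidef) : hA.sqrtᵀ = hA.sqrt := by
  unfold Matrix.PosSemidef.sqrt
  rw [transpose_mul, transpose_mul, diagonal_transpose, ← conjTranspose_eq_transpose_of_trivial,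
    ← conjTranspose_eq_transpose_of_trivial, Matrix.star_eq_conjTranspose, conjTranspose_conjTranspose,
    Matrix.mul_assoc]

lemma Matrix.PosSemidef.sqrt_mul_self' {n : Type*} [Fintype n] [DecidableEq n]
    {A : Matrix n n ℝ} (hA : A.PosSemidef) : hA.sqrt * hA.sqrt = A := by
  unfold Matrix.PosSemidef.sqrt
  set U : Matrix n n ℝ := (hA.1.eigenvectorUnitary : Matrix n n ℝ)
  have hU : (star hA.1.eigenvectorUnitary : Matrix n n ℝ) * U = 1 := Unitary.coe_star_mul_self _
  have hD : diagonal ((↑) ∘ (√·) ∘ hA.1.eigenvalues) * diagonal ((↑) ∘ (√·) ∘ hA.1.eigenvalues)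
      = diagonal (RCLike.ofReal ∘ hA.1.eigenvalues : n → ℝ) := by
    rw [diagonal_mul_diagonal]
    congr 1
    funext i
    simp [Real.mul_self_sqrt (hA.eigenvalues_nonneg i)]
  conv_rhs => rw [hA.1.spectral_theorem]
  rw [Unitary.conjStarAlgAut_apply, ← hD]
  simp only [Matrix.mul_assoc]
  rw [← Matrix.mul_assoc (star _ : Matrix n n ℝ) U, hU, Matrix.one_mul]

lemma lintegral_pi_prod {n : ℕ} (μ : Fin n → Measure ℝ) [∀ i, SigmaFinite (μ i)]
    (f : Fin n → ℝ → ENNReal) (hf : ∀ i, Measurable (f i)) :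
    ∫⁻ x : Fin n → ℝ, ∏ i, f i (x i) ∂(Measure.pi μ) = ∏ i, ∫⁻ x, f i x ∂(μ i) := by
  induction n with
  | zero => simp
  | succ n ih =>
    rw [← ((measurePreserving_piFinSuccAbove μ 0).symm).lintegral_comp_emb
      (MeasurableEquiv.measurableEmbedding _)]
    simp_rw [MeasurableEquiv.piFinSuccAbove_symm_apply, Fin.insertNthEquiv,
      Fin.prod_univ_succ, Fin.insertNth_zero, Equiv.coe_fn_mk, cast_eq,
      Fin.zero_succAbove, Fin.cons_zero, Fin.cons_succ]
    have hm : Measurable fun (y : Fin n → ℝ) => ∏ i : Fin n, f i.succ (y i) :=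
      Finset.measurable_prod _ fun i _ => (hf i.succ).comp (measurable_pi_apply i)
    rw [lintegral_prod_mul (hf 0).aemeasurable hm.aemeasurable,
      ih (fun i => μ i.succ) (fun i => f i.succ) (fun i => hf i.succ)]

lemma pi_gaussian_eq_withDensity (p : ℕ) :
    (Measure.pi fun _ : Fin p => gaussianReal 0 1)
      = volume.withDensity (fun x : Fin p → ℝ => ∏ i, gaussianPDF 0 1 (x i)) := by
  refine Measure.pi_eq fun s hs => ?_
  have hmeas : ∀ i : Fin p, Measurable fun x : ℝ => (s i).indicator (gaussianPDF 0 1) x :=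
    fun i => (measurable_gaussianPDF 0 1).indicator (hs i)
  rw [withDensity_apply _ (MeasurableSet.univ_pi hs),
    ← lintegral_indicator (MeasurableSet.univ_pi hs)]
  have : ∀ x : Fin p → ℝ, (Set.pi Set.univ s).indicator (fun x => ∏ i, gaussianPDF 0 1 (x i)) x
      = ∏ i, (s i).indicator (gaussianPDF 0 1) (x i) := by
    intro x
    by_cases hx : x ∈ Set.pi Set.univ s
    · rw [Set.indicator_of_mem hx]
      exact Finset.prod_congr rfl fun i _ =>
        (Set.indicator_of_mem (hx i (Set.mem_univ i)) _).symm
    · rw [Set.indicator_of_notMem hx]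
      rw [Set.mem_univ_pi] at hx
      push_neg at hx
      obtain ⟨i, hi⟩ := hx
      exact (Finset.prod_eq_zero (Finset.mem_univ i) (Set.indicator_of_notMem hi _)).symm
  simp_rw [this]
  rw [show (volume : Measure (Fin p → ℝ)) = Measure.pi fun _ => (volume : Measure ℝ) from rfl]
  rw [lintegral_pi_prod _ _ hmeas]
  exact Finset.prod_congr rfl fun i _ => by
    rw [lintegral_indicator (hs i), ← gaussianReal_apply 0 one_ne_zero]

lemma prod_gaussianPDF_eq (p : ℕ) (x : Fin p → ℝ) :
    ∏ i, gaussianPDF 0 1 (x i)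
      = ENNReal.ofReal ((Real.sqrt (2 * Real.pi))⁻¹ ^ p * Real.exp (-(∑ i, (x i) ^ 2) / 2)) := by
  unfold gaussianPDF gaussianPDFReal
  rw [← ENNReal.ofReal_prod_of_nonneg (fun i _ => by positivity)]
  congr 1
  rw [Finset.prod_mul_distrib, Finset.prod_const]
  simp only [NNReal.coe_one, mul_one, sub_zero, Finset.card_univ, Fintype.card_fin]
  rw [← Real.exp_sum]
  congr 2
  simp only [neg_div, Finset.sum_neg_distrib, ← Finset.sum_div]

lemma pi_gaussian_map_inv (p : ℕ) (e : (Fin p → ℝ) → (Fin p → ℝ)) (he : Measurable e)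
    (hvol : MeasurePreserving e volume volume)
    (hnorm : ∀ x, ∑ i, (e x i) ^ 2 = ∑ i, (x i) ^ 2) :
    (Measure.pi fun _ : Fin p => gaussianReal 0 1).map e
      = Measure.pi fun _ : Fin p => gaussianReal 0 1 := by
  set D : (Fin p → ℝ) → ENNReal := fun x => ∏ i, gaussianPDF 0 1 (x i) with hD
  have hDe : ∀ x, D (e x) = D x := by
    intro x
    rw [hD]
    simp only
    rw [prod_gaussianPDF_eq, prod_gaussianPDF_eq, hnorm]
  have hDm : Measurable D :=
    Finset.measurable_prod _ fun i _ => (measurable_gaussianPDF 0 1).comp (measurable_pi_apply i)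
  rw [pi_gaussian_eq_withDensity]
  ext s hs
  rw [Measure.map_apply he hs, withDensity_apply _ (he hs), withDensity_apply _ hs,
    ← lintegral_indicator (he hs), ← lintegral_indicator hs]
  have key : ∀ x, (e ⁻¹' s).indicator D x = s.indicator D (e x) := by
    intro x
    have h2 := Set.indicator_comp_right (s := s) (g := D) e (x := x)
    rw [← h2]
    by_cases hx : x ∈ e ⁻¹' s
    · rw [Set.indicator_of_mem hx, Set.indicator_of_mem hx, Function.comp_apply, hDe]
    · rw [Set.indicator_of_notMem hx, Set.indicator_of_notMem hx]
  simp_rw [← hD, key]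
  rw [hvol.lintegral_comp (hDm.indicator hs)]

lemma pi_gaussian_map_eval (p : ℕ) (i₀ : Fin p) :
    (Measure.pi fun _ : Fin p => gaussianReal 0 1).map (fun x => x i₀) = gaussianReal 0 1 := by
  ext s hs
  rw [Measure.map_apply (measurable_pi_apply i₀) hs]
  have : (fun x : Fin p → ℝ => x i₀) ⁻¹' s
      = Set.pi Set.univ (Function.update (fun _ => Set.univ) i₀ s) := Set.eval_preimage
  rw [this, Measure.pi_pi]
  rw [Finset.prod_eq_single i₀ (fun j _ hj => by
    rw [Function.update_of_ne hj]; exact measure_univ) (by simp)]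
  rw [Function.update_self]

lemma pi_gaussian_map_dot (p : ℕ) (hp : 0 < p) (d : Fin p → ℝ) (hd : d ≠ 0) :
    (Measure.pi fun _ : Fin p => gaussianReal 0 1).map (fun x => ∑ i, d i * x i)
      = gaussianReal 0 ⟨∑ i, d i ^ 2, by positivity⟩ := by
  obtain ⟨i₁, hi₁⟩ := Function.ne_iff.mp hd
  have hi₁' : d i₁ ≠ 0 := by simpa using hi₁
  have hsum : 0 < ∑ i, d i ^ 2 :=
    Finset.sum_pos' (fun i _ => sq_nonneg _) ⟨i₁, Finset.mem_univ _, by positivity⟩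
  set nd : ℝ := Real.sqrt (∑ i, d i ^ 2) with hnd
  have hnd0 : 0 < nd := Real.sqrt_pos.mpr hsum
  set u : EuclideanSpace ℝ (Fin p) := (WithLp.equiv 2 (Fin p → ℝ)).symm (fun i => d i / nd)
    with hu
  have hu_norm : ‖u‖ = 1 := by
    rw [EuclideanSpace.norm_eq]
    have : ∀ i, ‖u i‖ ^ 2 = d i ^ 2 / (∑ j, d j ^ 2) := by
      intro i
      rw [Real.norm_eq_abs, sq_abs]
      show (d i / nd) ^ 2 = _
      rw [div_pow, hnd, Real.sq_sqrt hsum.le]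
    simp_rw [this]
    rw [← Finset.sum_div, div_self hsum.ne']
    exact Real.sqrt_one
  set i₀ : Fin p := ⟨0, hp⟩ with hi₀
  have hcard : Module.finrank ℝ (EuclideanSpace ℝ (Fin p)) = Fintype.card (Fin p) := by
    simp [finrank_euclideanSpace]
  have horth : Orthonormal ℝ (({i₀} : Set (Fin p)).restrict (fun _ => u)) := by
    constructor
    · intro i; exact hu_norm
    · intro i j hij
      exact absurd (Subsingleton.elim i j) hij
  obtain ⟨b, hb⟩ := horth.exists_orthonormalBasis_extension_of_card_eq hcard
  have hbu : b i₀ = u := hb i₀ rfl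
  set e : (Fin p → ℝ) → (Fin p → ℝ) := fun x =>
    WithLp.equiv 2 (Fin p → ℝ) (b.repr ((WithLp.equiv 2 (Fin p → ℝ)).symm x)) with he_def
  have hvol : MeasurePreserving e volume volume :=
    (EuclideanSpace.volume_preserving_symm_measurableEquiv_toLp (Fin p)).comp
      (b.repr.measurePreserving.comp (PiLp.volume_preserving_toLp (Fin p)))
  have he : Measurable e := hvol.measurable
  have hnorm : ∀ x, ∑ i, (e x i) ^ 2 = ∑ i, (x i) ^ 2 := by
    intro x
    have h1 : ∀ y : EuclideanSpace ℝ (Fin p), (inner ℝ y y : ℝ) = ∑ i, (y i) ^ 2 := by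
      intro y
      rw [PiLp.inner_apply]
      exact Finset.sum_congr rfl fun i _ => by simp [sq]
    have h2 := b.repr.inner_map_map ((WithLp.equiv 2 (Fin p → ℝ)).symm x)
      ((WithLp.equiv 2 (Fin p → ℝ)).symm x)
    rw [h1, h1] at h2
    exact h2
  have hmape := pi_gaussian_map_inv p e he hvol hnorm
  have hdecomp : (fun x : Fin p → ℝ => ∑ i, d i * x i)
      = (fun y : Fin p → ℝ => nd * y i₀) ∘ e := by
    funext x
    show _ = nd * (b.repr ((WithLp.equiv 2 (Fin p → ℝ)).symm x) i₀)
    rw [b.repr_apply_apply, hbu, hu]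
    rw [show (inner ℝ ((WithLp.equiv 2 (Fin p → ℝ)).symm fun i => d i / nd)
        ((WithLp.equiv 2 (Fin p → ℝ)).symm x) : ℝ) = ∑ i, (d i / nd) * x i from by
      rw [PiLp.inner_apply]; simp [mul_comm]]
    rw [Finset.mul_sum]
    exact Finset.sum_congr rfl fun i _ => by field_simp
  rw [hdecomp, ← Measure.map_map (by fun_prop) he, hmape]
  have : (fun y : Fin p → ℝ => nd * y i₀) = (fun t : ℝ => nd * t) ∘ (fun y => y i₀) := rfl
  have hev : Measurable (fun y : Fin p → ℝ => y i₀) := measurable_pi_apply i₀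
  rw [this, ← Measure.map_map (by fun_prop) hev,
    pi_gaussian_map_eval p i₀, gaussianReal_map_const_mul]
  congr 1
  · ring
  · ext
    push_cast
    rw [mul_one, Real.sq_sqrt hsum.le]
    rfl

lemma std_pdf (x : ℝ) : gaussianPDFReal 0 1 x = (Real.sqrt (2 * Real.pi))⁻¹ *
    Real.exp (-x ^ 2 / 2) := by
  unfold gaussianPDFReal
  norm_num

lemma std_gaussian_Ioi (t : ℝ) : ((gaussianReal 0 1) (Set.Ioi t)).toReal = Q t := by
  rw [gaussianReal_apply_eq_integral 0 one_ne_zero,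
    ENNReal.toReal_ofReal (integral_nonneg fun x => gaussianPDFReal_nonneg 0 1 x)]
  simp_rw [std_pdf]
  rw [MeasureTheory.integral_const_mul]
  rfl

lemma std_gaussian_Ici (t : ℝ) : ((gaussianReal 0 1) (Set.Ici t)).toReal = Q t := by
  rw [gaussianReal_apply_eq_integral 0 one_ne_zero,
    ENNReal.toReal_ofReal (integral_nonneg fun x => gaussianPDFReal_nonneg 0 1 x),
    integral_Ici_eq_integral_Ioi]
  simp_rw [std_pdf]
  rw [MeasureTheory.integral_const_mul]
  rfl

lemma std_gaussian_Iio (t : ℝ) : ((gaussianReal 0 1) (Set.Iio t)).toReal = Q (-t) := by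
  have hmap : (gaussianReal 0 1).map (fun x : ℝ => (-1) * x) = gaussianReal 0 1 := by
    rw [gaussianReal_map_const_mul]
    norm_num
  have : (gaussianReal 0 1) (Set.Iio t) = (gaussianReal 0 1) (Set.Ioi (-t)) := by
    conv_lhs => rw [← hmap]
    rw [Measure.map_apply (by fun_prop) measurableSet_Iio]
    congr 1
    ext x
    simp only [Set.mem_preimage, Set.mem_Iio, Set.mem_Ioi]
    constructor <;> intro h <;> linarith
  rw [this, std_gaussian_Ioi]

lemma gaussianReal_eq_map_affine (μ : ℝ) (v : ℝ≥0) :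
    gaussianReal μ v = (gaussianReal 0 1).map (fun z => μ + Real.sqrt v * z) := by
  have h1 : (gaussianReal 0 1).map (fun z : ℝ => Real.sqrt v * z) = gaussianReal 0 v := by
    rw [gaussianReal_map_const_mul]
    congr 1
    · ring
    · ext
      push_cast
      rw [mul_one, Real.sq_sqrt v.coe_nonneg]
  have h2 : (gaussianReal 0 v).map (fun z : ℝ => μ + z) = gaussianReal μ v := by
    rw [gaussianReal_map_const_add]
    rw [zero_add]
  rw [← h2, ← h1, Measure.map_map (by fun_prop) (by fun_prop)]
  rfl

lemma gaussianReal_le_toReal (μ : ℝ) (v : ℝ≥0) (hv : v ≠ 0) (β : ℝ) :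
    ((gaussianReal μ v) {x | β ≤ x}).toReal = Q ((β - μ) / Real.sqrt v) := by
  have hσ : 0 < Real.sqrt v := Real.sqrt_pos.mpr (NNReal.coe_pos.mpr (pos_iff_ne_zero.mpr hv))
  rw [gaussianReal_eq_map_affine μ v,
    Measure.map_apply (by fun_prop)
      (show MeasurableSet {x : ℝ | β ≤ x} from measurableSet_le measurable_const measurable_id)]
  have : (fun z : ℝ => μ + Real.sqrt v * z) ⁻¹' {x | β ≤ x} = Set.Ici ((β - μ) / Real.sqrt v) := by
    ext z
    simp only [Set.mem_preimage, Set.mem_setOf_eq, Set.mem_Ici]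
    rw [div_le_iff₀ hσ]
    constructor <;> intro h <;> nlinarith
  rw [this, std_gaussian_Ici]

lemma gaussianReal_lt_toReal (μ : ℝ) (v : ℝ≥0) (hv : v ≠ 0) (β : ℝ) :
    ((gaussianReal μ v) {x | x < β}).toReal = Q ((μ - β) / Real.sqrt v) := by
  have hσ : 0 < Real.sqrt v := Real.sqrt_pos.mpr (NNReal.coe_pos.mpr (pos_iff_ne_zero.mpr hv))
  rw [gaussianReal_eq_map_affine μ v,
    Measure.map_apply (by fun_prop)
      (show MeasurableSet {x : ℝ | x < β} from measurableSet_lt measurable_id measurable_const)]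
  have : (fun z : ℝ => μ + Real.sqrt v * z) ⁻¹' {x | x < β} = Set.Iio ((β - μ) / Real.sqrt v) := by
    ext z
    simp only [Set.mem_preimage, Set.mem_setOf_eq, Set.mem_Iio]
    rw [lt_div_iff₀ hσ]
    constructor <;> intro h <;> nlinarith
  rw [this, std_gaussian_Iio]
  congr 1
  field_simp
  ring

lemma gaussianVec_map_dot (p : ℕ) (hp : 0 < p) (m w : Fin p → ℝ) (hw : w ≠ 0)
    (S : Matrix (Fin p) (Fin p) ℝ) (hS : S.PosDef) :
    (gaussianVec m hS.posSemidef).map (fun x => ∑ i, w i * x i)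
      = gaussianReal (∑ i, w i * m i)
          ⟨w ⬝ᵥ S.mulVec w, le_of_lt (hS.dotProduct_mulVec_pos hw)⟩ := by
  set R := hS.posSemidef.sqrt with hR
  have hRsymm : Rᵀ = R := hS.posSemidef.sqrt_transpose'
  set d : Fin p → ℝ := R.mulVec w with hd
  have hdot : ∀ x : Fin p → ℝ, ∑ i, w i * (R.mulVec x) i = ∑ j, d j * x j := by
    intro x
    have : ∑ i, w i * (R.mulVec x) i = w ⬝ᵥ R.mulVec x := rfl
    rw [this, Matrix.dotProduct_mulVec]
    have hv : R.vecMul w = R.mulVec w := by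
      rw [← Matrix.mulVec_transpose, hRsymm]
    rw [hv]
    rfl
  have hsumd : ∑ j, d j ^ 2 = w ⬝ᵥ S.mulVec w := by
    have h1 : ∑ j, d j ^ 2 = d ⬝ᵥ d := by
      simp [dotProduct, sq]
    rw [h1, hd]
    rw [Matrix.dotProduct_mulVec, ← Matrix.mulVec_transpose, hRsymm,
      Matrix.mulVec_mulVec, hR, hS.posSemidef.sqrt_mul_self']
    rw [dotProduct_comm]
  have hd0 : d ≠ 0 := by
    intro h
    have : w ⬝ᵥ S.mulVec w = 0 := by
      rw [← hsumd, h]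
      simp
    exact absurd this (ne_of_gt (hS.dotProduct_mulVec_pos hw))
  have hT : Measurable (fun x : Fin p → ℝ => m + R.mulVec x) :=
    measurable_pi_lambda _ fun i => measurable_const.add
      (Finset.measurable_sum Finset.univ fun j _ => (measurable_pi_apply (X := fun _ => ℝ) j).const_mul (R i j))
  have hdotm : Measurable (fun x : Fin p → ℝ => ∑ i, w i * x i) :=
    Finset.measurable_sum Finset.univ fun i _ => (measurable_pi_apply (X := fun _ => ℝ) i).const_mul (w i)
  rw [gaussianVec, Measure.map_map hdotm hT]
  have hcomp : ((fun x : Fin p → ℝ => ∑ i, w i * x i) ∘ fun x => m + R.mulVec x)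
      = (fun t : ℝ => (∑ i, w i * m i) + t) ∘ (fun x => ∑ j, d j * x j) := by
    funext x
    show ∑ i, w i * (m + R.mulVec x) i = _
    simp only [Pi.add_apply, Function.comp_apply]
    rw [Finset.sum_congr rfl (fun i _ => mul_add (w i) (m i) ((R.mulVec x) i)),
      Finset.sum_add_distrib, hdot]
  rw [hcomp, ← Measure.map_map (by fun_prop)
    (Finset.measurable_sum Finset.univ fun j _ => (measurable_pi_apply (X := fun _ => ℝ) j).const_mul (d j)),
    pi_gaussian_map_dot p hp d hd0, gaussianReal_map_const_add (v := ⟨∑ i, d i ^ 2, by positivity⟩), zero_add]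
  congr 1
  ext
  exact hsumd

/-- The half-space classifier through `(m₁+m₂)/2` orthogonal to `m₁-m₂`, applied to the
mixture `α N(m₁,Σ₁) + (1-α) N(m₂,Σ₂)`, has misclassification error
`α Q(‖m₁-m₂‖²/(2√((m₁-m₂)ᵀΣ₁(m₁-m₂)))) + (1-α) Q(‖m₁-m₂‖²/(2√((m₁-m₂)ᵀΣ₂(m₁-m₂))))`.
The classifier labels `x` as component 1 iff `(m₁-m₂)ᵀx ≥ (‖m₁‖²-‖m₂‖²)/2`. -/
theorem halfspace_classifier_error (p : ℕ) (hp : 0 < p) (m₁ m₂ : Fin p → ℝ) (hm : m₁ ≠ m₂)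
    (S₁ S₂ : Matrix (Fin p) (Fin p) ℝ) (h₁ : S₁.PosDef) (h₂ : S₂.PosDef)
    (α : ℝ) (hα : α ∈ Set.Icc (0 : ℝ) 1) (β : ℝ)
    (hβ : β = ((∑ i, (m₁ i) ^ 2) - ∑ i, (m₂ i) ^ 2) / 2) :
    α * ((gaussianVec m₁ h₁.posSemidef) {x | ∑ i, (m₁ i - m₂ i) * x i < β}).toReal
      + (1 - α) * ((gaussianVec m₂ h₂.posSemidef) {x | β ≤ ∑ i, (m₁ i - m₂ i) * x i}).toReal
    = α * Q ((∑ i, (m₁ i - m₂ i) ^ 2) /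
          (2 * Real.sqrt ((fun i => m₁ i - m₂ i) ⬝ᵥ S₁.mulVec fun i => m₁ i - m₂ i)))
      + (1 - α) * Q ((∑ i, (m₁ i - m₂ i) ^ 2) /
          (2 * Real.sqrt ((fun i => m₁ i - m₂ i) ⬝ᵥ S₂.mulVec fun i => m₁ i - m₂ i))) := by
  set w : Fin p → ℝ := fun i => m₁ i - m₂ i with hw_def
  have hw : w ≠ 0 := by
    intro h
    apply hm
    funext i
    have := congrFun h i
    simp only [hw_def, Pi.zero_apply] at this
    linarith
  have hdotm : Measurable (fun x : Fin p → ℝ => ∑ i, w i * x i) :=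
    Finset.measurable_sum Finset.univ fun i _ => (measurable_pi_apply (X := fun _ => ℝ) i).const_mul (w i)
  have hv₁ : (⟨w ⬝ᵥ S₁.mulVec w, le_of_lt (h₁.dotProduct_mulVec_pos hw)⟩ : ℝ≥0) ≠ 0 := by
    intro h
    have := congrArg NNReal.toReal h
    change w ⬝ᵥ S₁.mulVec w = 0 at this
    exact absurd this (ne_of_gt (h₁.dotProduct_mulVec_pos hw))
  have hv₂ : (⟨w ⬝ᵥ S₂.mulVec w, le_of_lt (h₂.dotProduct_mulVec_pos hw)⟩ : ℝ≥0) ≠ 0 := by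
    intro h
    have := congrArg NNReal.toReal h
    change w ⬝ᵥ S₂.mulVec w = 0 at this
    exact absurd this (ne_of_gt (h₂.dotProduct_mulVec_pos hw))
  -- first term
  have hset₁ : {x : Fin p → ℝ | ∑ i, w i * x i < β}
      = (fun x : Fin p → ℝ => ∑ i, w i * x i) ⁻¹' {t | t < β} := rfl
  have hset₂ : {x : Fin p → ℝ | β ≤ ∑ i, w i * x i}
      = (fun x : Fin p → ℝ => ∑ i, w i * x i) ⁻¹' {t | β ≤ t} := rfl
  have hm₁ : ((gaussianVec m₁ h₁.posSemidef) {x | ∑ i, w i * x i < β}).toReal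
      = Q (((∑ i, w i * m₁ i) - β) / Real.sqrt (w ⬝ᵥ S₁.mulVec w)) := by
    rw [hset₁, ← Measure.map_apply hdotm (show MeasurableSet {t : ℝ | t < β} from measurableSet_lt measurable_id measurable_const),
      gaussianVec_map_dot p hp m₁ w hw S₁ h₁, gaussianReal_lt_toReal _ _ hv₁]
    rfl
  have hm₂ : ((gaussianVec m₂ h₂.posSemidef) {x | β ≤ ∑ i, w i * x i}).toReal
      = Q ((β - ∑ i, w i * m₂ i) / Real.sqrt (w ⬝ᵥ S₂.mulVec w)) := by
    rw [hset₂, ← Measure.map_apply hdotm (show MeasurableSet {t : ℝ | β ≤ t} from measurableSet_le measurable_const measurable_id),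
      gaussianVec_map_dot p hp m₂ w hw S₂ h₂, gaussianReal_le_toReal _ _ hv₂]
    rfl
  have harith₁ : (∑ i, w i * m₁ i) - β = (∑ i, w i ^ 2) / 2 := by
    rw [hβ]
    rw [eq_div_iff (by norm_num : (2:ℝ) ≠ 0)]
    rw [sub_mul, div_mul_cancel₀ _ (by norm_num : (2:ℝ) ≠ 0)]
    rw [Finset.sum_mul, ← Finset.sum_sub_distrib, ← Finset.sum_sub_distrib]
    exact Finset.sum_congr rfl fun i _ => by simp only [hw_def]; ring
  have harith₂ : β - (∑ i, w i * m₂ i) = (∑ i, w i ^ 2) / 2 := by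
    rw [hβ]
    rw [eq_div_iff (by norm_num : (2:ℝ) ≠ 0)]
    rw [sub_mul, div_mul_cancel₀ _ (by norm_num : (2:ℝ) ≠ 0)]
    rw [Finset.sum_mul, ← Finset.sum_sub_distrib, ← Finset.sum_sub_distrib]
    exact Finset.sum_congr rfl fun i _ => by simp only [hw_def]; ring
  rw [hm₁, hm₂, harith₁, harith₂, div_div _ (2:ℝ) _, div_div _ (2:ℝ) _]
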